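/- Let 𝔅 be a bornology with closed base on a metric space X. Then X satisfies S_fin(Γ_{𝔅ˢ}, 𝒪) if and only if X satisfies U_fin(𝒪_{𝔅ˢ}, 𝒪), where 𝒪 is the family of countable open covers of X. -/

import Mathlib

open Set Metric Filter

/-- A bornology on a metric space: an ideal of subsets covering `X`. -/
structure BornologyOn (X : Type*) [MetricSpace X] where
  sets : Set (Set X)
  union_mem : ∀ {A B : Set X}, A ∈ sets → B ∈ sets → A ∪ B ∈ sets
  subset_mem : ∀ {A B : Set X}, A ∈ sets → B ⊆ A → B ∈ sets
  covers : ∀ x : X, ∃ A ∈ sets, x ∈ A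

variable {X : Type*} [MetricSpace X]

/-- `𝔅` has a closed base: a cofinal subfamily consisting of closed sets. -/
def HasClosedBase (𝔅 : BornologyOn X) : Prop :=
  ∃ base ⊆ 𝔅.sets, (∀ C ∈ base, IsClosed C) ∧ ∀ A ∈ 𝔅.sets, ∃ C ∈ base, A ⊆ C

/-- The `δ`-enlargement `B^δ = ⋃_{x ∈ B} S(x, δ)`. -/
def enlarge (B : Set X) (δ : ℝ) : Set X := ⋃ x ∈ B, ball x δ

/-- A `𝔅ˢ`-cover: `X ∉ 𝒰` and every `B ∈ 𝔅` has `B^δ ⊆ U` for some `U ∈ 𝒰`, `δ > 0`. -/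
def IsBCover (𝔅 : BornologyOn X) (𝒰 : Set (Set X)) : Prop :=
  univ ∉ 𝒰 ∧ ∀ B ∈ 𝔅.sets, ∃ U ∈ 𝒰, ∃ δ > 0, enlarge B δ ⊆ U

/-- An open `𝔅ˢ`-cover. -/
def IsOpenBCover (𝔅 : BornologyOn X) (𝒰 : Set (Set X)) : Prop :=
  (∀ U ∈ 𝒰, IsOpen U) ∧ (∀ x : X, ∃ U ∈ 𝒰, x ∈ U) ∧ IsBCover 𝔅 𝒰

/-- A `γ_{𝔅ˢ}`-cover (set form): infinite family of open sets such that for each `B ∈ 𝔅`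
all but finitely many members contain some enlargement of `B`. -/
def IsGammaBCover (𝔅 : BornologyOn X) (𝒰 : Set (Set X)) : Prop :=
  𝒰.Infinite ∧ (∀ U ∈ 𝒰, IsOpen U) ∧
    ∀ B ∈ 𝔅.sets, {U ∈ 𝒰 | ¬ ∃ δ > 0, enlarge B δ ⊆ U}.Finite

/-- A `γ_{𝔅ˢ}`-cover given as a sequence `{Uₙ}`: infinite, open, and for each `B ∈ 𝔅`
there are `n₀` and `δₙ > 0` with `B^{δₙ} ⊆ Uₙ` for all `n ≥ n₀`. -/
def IsGammaBSeq (𝔅 : BornologyOn X) (U : ℕ → Set X) : Prop :=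
  (Set.range U).Infinite ∧ (∀ n, IsOpen (U n)) ∧
    ∀ B ∈ 𝔅.sets, ∃ n₀, ∀ n ≥ n₀, ∃ δ > 0, enlarge B δ ⊆ U n

/-- A `γ`-cover: infinite family of open sets, every point in all but finitely many members. -/
def IsGammaCover (𝒰 : Set (Set X)) : Prop :=
  𝒰.Infinite ∧ (∀ U ∈ 𝒰, IsOpen U) ∧ ∀ x : X, {U ∈ 𝒰 | x ∉ U}.Finite

/-- An open cover of `X`. -/
def IsOpenCover (𝒰 : Set (Set X)) : Prop :=
  (∀ U ∈ 𝒰, IsOpen U) ∧ ∀ x : X, ∃ U ∈ 𝒰, x ∈ U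

/-- The family `𝒪_{𝔅ˢ}` of countable open `𝔅ˢ`-covers. -/
def OBs (𝔅 : BornologyOn X) : Set (Set (Set X)) :=
  {𝒰 | 𝒰.Countable ∧ IsOpenBCover 𝔅 𝒰}

/-- The family `Γ_{𝔅ˢ}` of countable `γ_{𝔅ˢ}`-covers. -/
def GBs (𝔅 : BornologyOn X) : Set (Set (Set X)) :=
  {𝒰 | 𝒰.Countable ∧ IsGammaBCover 𝔅 𝒰}

/-- The family `𝒪` of countable open covers. -/
def Ocov (X : Type*) [MetricSpace X] : Set (Set (Set X)) :=
  {𝒰 | 𝒰.Countable ∧ IsOpenCover 𝒰}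

/-- The selection principle `S₁(𝒜, ℬ)`. -/
def S1 (𝒜 ℬ : Set (Set (Set X))) : Prop :=
  ∀ 𝒰 : ℕ → Set (Set X), (∀ n, 𝒰 n ∈ 𝒜) →
    ∃ sel : ℕ → Set X, (∀ n, sel n ∈ 𝒰 n) ∧ Set.range sel ∈ ℬ

/-- The selection principle `S_fin(𝒜, ℬ)`. -/
def Sfin (𝒜 ℬ : Set (Set (Set X))) : Prop :=
  ∀ 𝒰 : ℕ → Set (Set X), (∀ n, 𝒰 n ∈ 𝒜) →
    ∃ 𝒱 : ℕ → Set (Set X), (∀ n, 𝒱 n ⊆ 𝒰 n ∧ (𝒱 n).Finite) ∧ (⋃ n, 𝒱 n) ∈ ℬ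

/-- The selection principle `U_fin(𝒜, ℬ)`. -/
def Ufin (𝒜 ℬ : Set (Set (Set X))) : Prop :=
  ∀ 𝒰 : ℕ → Set (Set X), (∀ n, 𝒰 n ∈ 𝒜) →
    ∃ 𝒱 : ℕ → Set (Set X), (∀ n, 𝒱 n ⊆ 𝒰 n ∧ (𝒱 n).Finite) ∧
      ((Set.range fun n => ⋃₀ 𝒱 n) ∈ ℬ ∨ ∃ n, ⋃₀ 𝒱 n = univ)

/-- ONE has a winning strategy in `G₁(𝒜, ℬ)`. -/
def OneWinsG1 (𝒜 ℬ : Set (Set (Set X))) : Prop :=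
  ∃ σ : List (Set X) → Set (Set X),
    (∀ h, σ h ∈ 𝒜) ∧
    ∀ play : ℕ → Set X,
      (∀ n, play n ∈ σ (List.ofFn fun i : Fin n => play i.1)) →
      Set.range play ∉ ℬ

/-- ONE has a winning strategy in `G_fin(𝒜, ℬ)`. -/
def OneWinsGfin (𝒜 ℬ : Set (Set (Set X))) : Prop :=
  ∃ σ : List (Set (Set X)) → Set (Set X),
    (∀ h, σ h ∈ 𝒜) ∧
    ∀ play : ℕ → Set (Set X),
      (∀ n, play n ⊆ σ (List.ofFn fun i : Fin n => play i.1) ∧ (play n).Finite) →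
      (⋃ n, play n) ∉ ℬ

/-- The winning condition in the `𝔅ˢ`-Hurewicz game / property: every `B ∈ 𝔅` is
eventually `δ`-enlarged into some member of `𝒱ₙ`. -/
def HurSel (𝔅 : BornologyOn X) (𝒱 : ℕ → Set (Set X)) : Prop :=
  ∀ B ∈ 𝔅.sets, ∃ n₀, ∀ n ≥ n₀, ∃ δ > 0, ∃ U ∈ 𝒱 n, enlarge B δ ⊆ U

/-- The strong `𝔅`-Hurewicz property. -/
def BsHurewicz (𝔅 : BornologyOn X) : Prop :=
  ∀ 𝒰 : ℕ → Set (Set X), (∀ n, 𝒰 n ∈ OBs 𝔅) →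
    ∃ 𝒱 : ℕ → Set (Set X), (∀ n, 𝒱 n ⊆ 𝒰 n ∧ (𝒱 n).Finite) ∧ HurSel 𝔅 𝒱

/-- ONE has a winning strategy in the `𝔅ˢ`-Hurewicz game. -/
def OneWinsHurewicz (𝔅 : BornologyOn X) : Prop :=
  ∃ σ : List (Set (Set X)) → Set (Set X),
    (∀ h, σ h ∈ OBs 𝔅) ∧
    ∀ play : ℕ → Set (Set X),
      (∀ n, play n ⊆ σ (List.ofFn fun i : Fin n => play i.1) ∧ (play n).Finite) →
      ¬ HurSel 𝔅 play

/-- A `𝔅ˢ`-groupable cover. -/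
def BsGroupable (𝔅 : BornologyOn X) (𝒰 : Set (Set X)) : Prop :=
  ∃ 𝒢 : ℕ → Set (Set X), (∀ n, (𝒢 n).Finite) ∧
    (∀ m n, m ≠ n → Disjoint (𝒢 m) (𝒢 n)) ∧ (⋃ n, 𝒢 n) = 𝒰 ∧ HurSel 𝔅 𝒢

/-- The family `𝒪_{𝔅ˢ}^{gp}` of `𝔅ˢ`-groupable open covers. -/
def OBsgp (𝔅 : BornologyOn X) : Set (Set (Set X)) :=
  {𝒰 | IsOpenCover 𝒰 ∧ BsGroupable 𝔅 𝒰}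

/-- The basic `τ_𝔅ˢ` neighbourhood `[B, ε]ˢ(f)` in `C(X)`. -/
def sball (f : C(X, ℝ)) (B : Set X) (ε : ℝ) : Set C(X, ℝ) :=
  {g | ∃ δ > 0, ∀ x ∈ enlarge B δ, |f x - g x| < ε}

/-- The topology `τ_𝔅ˢ` of strong uniform convergence on `𝔅` on `C(X)`. -/
def tauBs (𝔅 : BornologyOn X) : TopologicalSpace C(X, ℝ) :=
  TopologicalSpace.generateFrom
    {S | ∃ f : C(X, ℝ), ∃ B ∈ 𝔅.sets, ∃ ε > 0, S = sball f B ε}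

/-- Countable `T`-tightness of a topological space. -/
def CountableTTightness {Y : Type*} (t : TopologicalSpace Y) : Prop :=
  ∀ ρ : Cardinal.{0}, ρ.IsRegular → Cardinal.aleph0 < ρ →
    ∀ A : Ordinal.{0} → Set Y, (∀ α β, α ≤ β → A α ⊆ A β) →
      (∀ α, α < ρ.ord → @IsClosed _ t (A α)) →
      @IsClosed _ t (⋃ α ∈ {α | α < ρ.ord}, A α)

lemma mono_finite_range_aux {V : ℕ → Set X} (hm : Monotone V) (hf : (Set.range V).Finite) :
    ∃ k₀, ∀ k, V k ⊆ V k₀ := by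
  obtain ⟨_, ⟨k₀, rfl⟩, hmax⟩ := hf.exists_maximal (Set.range_nonempty V)
  refine ⟨k₀, fun k => ?_⟩
  rcases le_total k k₀ with h | h
  · exact hm h
  · exact hmax ⟨k, rfl⟩ (hm h)

theorem stmt8 (𝔅 : BornologyOn X) (hcb : HasClosedBase 𝔅) :
    Sfin (GBs 𝔅) (Ocov X) ↔ Ufin (OBs 𝔅) (Ocov X) := by
  constructor
  · -- Sfin(Γ_Bs, O) → Ufin(O_Bs, O)
    intro hS 𝒰 h𝒰
    by_cases hP : ∃ n, ∃ F : Set (Set X), F ⊆ 𝒰 n ∧ F.Finite ∧ ⋃₀ F = univ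
    · obtain ⟨n₀, F, hF1, hF2, hF3⟩ := hP
      refine ⟨fun n => if n = n₀ then F else ∅, fun n => ?_, Or.inr ⟨n₀, by simp [hF3]⟩⟩
      by_cases h : n = n₀ <;> simp [h, hF1, hF2]
    · have hX : Nonempty X := by
        by_contra h
        exact hP ⟨0, ∅, empty_subset _, finite_empty, by
          simp [Set.univ_eq_empty_iff.2 (by simpa using h)]⟩
      -- enumerate each cover
      have hne : ∀ n, (𝒰 n).Nonempty := by
        intro n
        obtain ⟨U, hU, _⟩ := (h𝒰 n).2.2.1 (Classical.arbitrary X)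
        exact ⟨U, hU⟩
      choose f hf using fun n => ((h𝒰 n).1).exists_eq_range (hne n)
      set V : ℕ → ℕ → Set X := fun n k => ⋃ j ∈ Finset.range (k + 1), f n j with hV
      have hmemV : ∀ n j k, j ≤ k → f n j ⊆ V n k := by
        intro n j k hjk
        exact Set.subset_biUnion_of_mem (Finset.mem_range.2 (by omega))
      have hmono : ∀ n, Monotone (V n) := by
        intro n k k' hk
        refine Set.iUnion₂_subset fun j hj => ?_
        exact hmemV n j k' (by have := Finset.mem_range.1 hj; omega)
      have hopen : ∀ n k, IsOpen (V n k) := by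
        intro n k
        refine isOpen_biUnion fun j _ => ?_
        exact (h𝒰 n).2.1 _ (by rw [hf n]; exact ⟨j, rfl⟩)
      -- each range (V n) is a countable γ_Bs-cover
      have hG : ∀ n, Set.range (V n) ∈ GBs 𝔅 := by
        intro n
        refine ⟨Set.countable_range _, ?_, fun W hW => ?_, fun B hB => ?_⟩
        · -- infinite
          intro hfin
          obtain ⟨k₀, hk₀⟩ := mono_finite_range_aux (hmono n) hfin
          refine hP ⟨n, f n '' {j | j ∈ Finset.range (k₀ + 1)}, ?_, ?_, ?_⟩
          · rw [hf n]; exact image_subset_range _ _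
          · exact (Set.finite_mem_finset _).image _
          · apply Set.eq_univ_of_univ_subset
            intro x _
            obtain ⟨U, hU, hxU⟩ := (h𝒰 n).2.2.1 x
            rw [hf n] at hU
            obtain ⟨j, rfl⟩ := hU
            have : x ∈ V n j := hmemV n j j le_rfl hxU
            have := hk₀ j this
            simpa [hV, Set.sUnion_image] using this
        · obtain ⟨k, rfl⟩ := hW; exact hopen n k
        · -- cofinitely many contain an enlargement of B
          obtain ⟨U, hU, δ, hδ, hBU⟩ := (h𝒰 n).2.2.2.2 B hB
          rw [hf n] at hU
          obtain ⟨k₀, rfl⟩ := hU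
          refine Set.Finite.subset ((Set.finite_Iio k₀).image (V n)) ?_
          rintro W ⟨⟨k, rfl⟩, hbad⟩
          by_cases hk : k < k₀
          · exact ⟨k, hk, rfl⟩
          · exact absurd ⟨δ, hδ, hBU.trans (hmemV n k₀ k (by omega))⟩ hbad
      obtain ⟨𝒲, h𝒲sub, h𝒲O⟩ := hS (fun n => Set.range (V n)) hG
      -- pick a uniform index bound for each finite 𝒲 n
      have hK : ∀ n, ∃ K, ∀ W ∈ 𝒲 n, W ⊆ V n K := by
        intro n
        have hchoice : ∀ W ∈ 𝒲 n, ∃ k, V n k = W := fun W hW => (h𝒲sub n).1 hW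
        choose idx hidx using hchoice
        have hfin : (Set.range fun W : 𝒲 n => idx W.1 W.2).Finite := by
          have : Finite (𝒲 n) := (h𝒲sub n).2
          exact Set.finite_range _
        obtain ⟨K, hKb⟩ := hfin.bddAbove
        refine ⟨K, fun W hW => ?_⟩
        rw [← hidx W hW]
        exact hmono n (hKb ⟨⟨W, hW⟩, rfl⟩)
      choose K hKspec using hK
      refine ⟨fun n => f n '' {j | j ∈ Finset.range (K n + 1)}, fun n => ?_, Or.inl ?_⟩
      · constructor
        · rw [hf n]; exact image_subset_range _ _
        · exact (Set.finite_mem_finset _).image _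
      · have hsU : ∀ n, ⋃₀ (f n '' {j | j ∈ Finset.range (K n + 1)}) = V n (K n) := by
          intro n; simp [hV, Set.sUnion_image]
        refine ⟨Set.countable_range _, fun U hU => ?_, fun x => ?_⟩
        · obtain ⟨n, rfl⟩ := hU
          show IsOpen (⋃₀ (f n '' {j | j ∈ Finset.range (K n + 1)}))
          rw [hsU n]; exact hopen n (K n)
        · obtain ⟨W, hWmem, hxW⟩ := h𝒲O.2.2 x
          obtain ⟨n, hW⟩ := Set.mem_iUnion.1 hWmem
          exact ⟨⋃₀ (f n '' {j | j ∈ Finset.range (K n + 1)}), ⟨n, rfl⟩,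
            by rw [hsU n]; exact hKspec n W hW hxW⟩
  · -- Ufin(O_Bs, O) → Sfin(Γ_Bs, O)
    intro hU 𝒰 h𝒰
    by_cases huniv : ∃ n, univ ∈ 𝒰 n
    · obtain ⟨n₀, hn₀⟩ := huniv
      refine ⟨fun n => if n = n₀ then {univ} else ∅, fun n => ?_, ?_⟩
      · by_cases h : n = n₀ <;> simp [h, hn₀, Set.singleton_subset_iff]
      · have : (⋃ n, (if n = n₀ then {univ} else ∅ : Set (Set X))) = {univ} := by
          apply Set.Subset.antisymm
          · intro W hW
            obtain ⟨n, hn⟩ := Set.mem_iUnion.1 hW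
            by_cases h : n = n₀ <;> simp [h] at hn <;> simp [hn]
          · intro W hW
            exact Set.mem_iUnion.2 ⟨n₀, by simpa using hW⟩
        rw [this]
        exact ⟨Set.countable_singleton _, fun U hU => by simp_all [isOpen_univ],
          fun x => ⟨univ, rfl, trivial⟩⟩
    · push_neg at huniv
      have hO : ∀ n, 𝒰 n ∈ OBs 𝔅 := by
        intro n
        obtain ⟨hc, hinf, hop, hfin⟩ := h𝒰 n
        have hgood : ∀ B ∈ 𝔅.sets, ∃ U ∈ 𝒰 n, ∃ δ > 0, enlarge B δ ⊆ U := by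
          intro B hB
          have := (hinf.diff (hfin B hB)).nonempty
          obtain ⟨U, hU⟩ := this
          simp only [Set.mem_diff, Set.mem_setOf_eq, not_and, not_not] at hU
          exact ⟨U, hU.1, hU.2 hU.1⟩
        refine ⟨hc, hop, fun x => ?_, huniv n, hgood⟩
        obtain ⟨B, hB, hxB⟩ := 𝔅.covers x
        obtain ⟨U, hUmem, δ, hδ, hBU⟩ := hgood B hB
        exact ⟨U, hUmem, hBU (Set.mem_biUnion hxB (mem_ball_self hδ))⟩
      obtain ⟨𝒱, h𝒱sub, h𝒱⟩ := hU 𝒰 hO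
      rcases h𝒱 with h𝒱 | ⟨n₀, hn₀⟩
      · refine ⟨𝒱, h𝒱sub, ?_, fun U hU => ?_, fun x => ?_⟩
        · exact Set.countable_iUnion fun n => ((h𝒱sub n).2).countable
        · obtain ⟨n, hn⟩ := Set.mem_iUnion.1 hU
          exact (h𝒰 n).2.2.1 U ((h𝒱sub n).1 hn)
        · obtain ⟨W, ⟨n, rfl⟩, hxW⟩ := h𝒱.2.2 x
          obtain ⟨U, hU, hxU⟩ := Set.mem_sUnion.1 hxW
          exact ⟨U, Set.mem_iUnion.2 ⟨n, hU⟩, hxU⟩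
      · refine ⟨fun n => if n = n₀ then 𝒱 n₀ else ∅, fun n => ?_, ?_⟩
        · by_cases h : n = n₀ <;> simp [h, h𝒱sub n₀]
        · have heq : (⋃ n, (if n = n₀ then 𝒱 n₀ else ∅ : Set (Set X))) = 𝒱 n₀ := by
            apply Set.Subset.antisymm
            · intro W hW
              obtain ⟨n, hn⟩ := Set.mem_iUnion.1 hW
              split_ifs at hn with h
              · exact hn
              · exact hn.elim
            · intro W hW
              exact Set.mem_iUnion.2 ⟨n₀, by simpa using hW⟩
          rw [heq]
          refine ⟨((h𝒱sub n₀).2).countable, fun U hU => (h𝒰 n₀).2.2.1 U ((h𝒱sub n₀).1 hU),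
            fun x => ?_⟩
          have : x ∈ ⋃₀ 𝒱 n₀ := by rw [hn₀]; trivial
          exact this
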